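/- For all nonnegative integers k and positive integers l, the quantity s_{k+l,k} satisfies s_{k+l,k} <= (2k+1) * 4^k * l * C(k+l, l), where s_{n,k} = (1/C(n,k)) * sum over i from 0 to k of C(n,2i) * C(n,2(k-i)) * C(2i,i) * C(2(k-i), k-i). -/
import Mathlib

/-- The rational numbers `s_{n,k}` for `n ≥ k ≥ 0`. -/
def sSeq (n k : ℕ) : ℚ :=
  (1 / (n.choose k : ℚ)) *
    ∑ i ∈ Finset.range (k + 1),
      (n.choose (2 * i) : ℚ) * (n.choose (2 * (k - i)) : ℚ) *
        ((2 * i).choose i : ℚ) * ((2 * (k - i)).choose (k - i) : ℚ)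

lemma step_lc (n a c : ℕ) (h : a ≤ c) :
    n.choose a * n.choose (c + 1) ≤ n.choose (a + 1) * n.choose c := by
  rcases le_or_gt n c with hc | hc
  · rcases eq_or_lt_of_le hc with rfl | hc'
    · -- c = n
      rcases eq_or_lt_of_le h with rfl | h'
      · simp [Nat.choose_succ_self]
      · calc n.choose a * n.choose (n + 1) = 0 := by simp [Nat.choose_eq_zero_of_lt]
          _ ≤ _ := Nat.zero_le _
    · simp [Nat.choose_eq_zero_of_lt hc', Nat.choose_eq_zero_of_lt (Nat.lt_succ_of_lt hc')]
  · -- c < n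
    have key : (a + 1) * (n - c) ≤ (n - a) * (c + 1) := by
      have h1 : a + 1 ≤ c + 1 := by omega
      have h2 : n - c ≤ n - a := by omega
      calc (a + 1) * (n - c) ≤ (c + 1) * (n - a) := Nat.mul_le_mul h1 h2
        _ = (n - a) * (c + 1) := Nat.mul_comm _ _
    have e1 := Nat.choose_succ_right_eq n a
    have e2 := Nat.choose_succ_right_eq n c
    have : n.choose a * n.choose (c + 1) * ((a + 1) * (c + 1)) ≤
        n.choose (a + 1) * n.choose c * ((a + 1) * (c + 1)) := by
      calc n.choose a * n.choose (c + 1) * ((a + 1) * (c + 1))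
          = n.choose a * (n.choose (c + 1) * (c + 1)) * (a + 1) := by ring
        _ = n.choose a * (n.choose c * (n - c)) * (a + 1) := by rw [e2]
        _ = (n.choose a * n.choose c) * ((a + 1) * (n - c)) := by ring
        _ ≤ (n.choose a * n.choose c) * ((n - a) * (c + 1)) := Nat.mul_le_mul_left _ key
        _ = (n.choose a * (n - a)) * n.choose c * (c + 1) := by ring
        _ = (n.choose (a + 1) * (a + 1)) * n.choose c * (c + 1) := by rw [e1]
        _ = n.choose (a + 1) * n.choose c * ((a + 1) * (c + 1)) := by ring
    exact Nat.le_of_mul_le_mul_right this (by positivity)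

lemma lc (n k : ℕ) : ∀ j ≤ k, n.choose (k - j) * n.choose (k + j) ≤ n.choose k * n.choose k := by
  intro j
  induction j with
  | zero => simp
  | succ j ih =>
    intro hj
    have hj' : j ≤ k := by omega
    have h1 : n.choose (k - (j + 1)) * n.choose ((k + j) + 1) ≤
        n.choose (k - (j + 1) + 1) * n.choose (k + j) := step_lc n _ _ (by omega)
    rw [show k - (j+1) + 1 = k - j by omega] at h1
    rw [show k + (j+1) = (k + j) + 1 by omega]
    exact le_trans h1 (ih hj')

lemma pairprod (n k i : ℕ) (h : i ≤ k) :
    n.choose (2 * i) * n.choose (2 * (k - i)) ≤ n.choose k * n.choose k := by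
  rcases le_or_gt (2 * i) k with h2 | h2
  · have := lc n k (k - 2 * i) (by omega)
    rw [show k - (k - 2*i) = 2*i by omega, show k + (k - 2*i) = 2*(k-i) by omega] at this
    exact this
  · have := lc n k (2 * i - k) (by omega)
    rw [show k - (2*i - k) = 2*(k-i) by omega, show k + (2*i - k) = 2*i by omega,
      Nat.mul_comm] at this
    exact this

lemma central_le (i : ℕ) : (2 * i).choose i ≤ 4 ^ i := by
  calc (2 * i).choose i ≤ ∑ j ∈ Finset.range (2 * i + 1), (2 * i).choose j :=
        Finset.single_le_sum (fun j _ => Nat.zero_le _) (by simp [Finset.mem_range]; omega)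
    _ = 2 ^ (2 * i) := Nat.sum_range_choose _
    _ = 4 ^ i := by rw [pow_mul]; norm_num

theorem stmt_15 (k l : ℕ) (hl : 1 ≤ l) :
    sSeq (k + l) k ≤ (2 * (k : ℚ) + 1) * 4 ^ k * l * ((k + l).choose l : ℚ) := by
  set n := k + l with hn
  have hC : 0 < n.choose k := Nat.choose_pos (by omega)
  have key : (∑ i ∈ Finset.range (k + 1),
      n.choose (2 * i) * n.choose (2 * (k - i)) * (2 * i).choose i *
        (2 * (k - i)).choose (k - i))
      ≤ (k + 1) * (n.choose k * n.choose k * 4 ^ k) := by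
    have hterm : ∀ i ∈ Finset.range (k + 1),
        n.choose (2 * i) * n.choose (2 * (k - i)) * (2 * i).choose i *
          (2 * (k - i)).choose (k - i) ≤ n.choose k * n.choose k * 4 ^ k := by
      intro i hi
      have hik : i ≤ k := by
        have := Finset.mem_range.mp hi; omega
      have h1 := pairprod n k i hik
      have h2 : (2 * i).choose i * (2 * (k - i)).choose (k - i) ≤ 4 ^ k := by
        calc (2 * i).choose i * (2 * (k - i)).choose (k - i)
            ≤ 4 ^ i * 4 ^ (k - i) := Nat.mul_le_mul (central_le i) (central_le (k - i))
          _ = 4 ^ k := by rw [← pow_add]; congr 1; omega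
      calc n.choose (2 * i) * n.choose (2 * (k - i)) * (2 * i).choose i *
            (2 * (k - i)).choose (k - i)
          = (n.choose (2 * i) * n.choose (2 * (k - i))) *
            ((2 * i).choose i * (2 * (k - i)).choose (k - i)) := by ring
        _ ≤ (n.choose k * n.choose k) * 4 ^ k := Nat.mul_le_mul h1 h2
    calc (∑ i ∈ Finset.range (k + 1),
        n.choose (2 * i) * n.choose (2 * (k - i)) * (2 * i).choose i *
          (2 * (k - i)).choose (k - i))
        ≤ ∑ _i ∈ Finset.range (k + 1), n.choose k * n.choose k * 4 ^ k :=
          Finset.sum_le_sum hterm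
      _ = (k + 1) * (n.choose k * n.choose k * 4 ^ k) := by
          simp [Finset.sum_const, Finset.card_range, mul_comm]
  have hCq : (0 : ℚ) < (n.choose k : ℚ) := by exact_mod_cast hC
  have hsym : (n.choose l : ℚ) = (n.choose k : ℚ) := by
    norm_cast
    exact Nat.choose_symm_of_eq_add (by omega)
  rw [sSeq, hsym]
  have hS : (∑ i ∈ Finset.range (k + 1),
      (n.choose (2 * i) : ℚ) * (n.choose (2 * (k - i)) : ℚ) *
        ((2 * i).choose i : ℚ) * ((2 * (k - i)).choose (k - i) : ℚ))
      = ((∑ i ∈ Finset.range (k + 1),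
        n.choose (2 * i) * n.choose (2 * (k - i)) * (2 * i).choose i *
          (2 * (k - i)).choose (k - i) : ℕ) : ℚ) := by
    push_cast
    rfl
  rw [hS, one_div, inv_mul_le_iff₀ hCq]
  have keyq : ((∑ i ∈ Finset.range (k + 1),
      n.choose (2 * i) * n.choose (2 * (k - i)) * (2 * i).choose i *
        (2 * (k - i)).choose (k - i) : ℕ) : ℚ)
      ≤ ((k : ℚ) + 1) * ((n.choose k : ℚ) * (n.choose k : ℚ) * 4 ^ k) := by
    exact_mod_cast key
  refine keyq.trans ?_
  have hlq : (1 : ℚ) ≤ (l : ℚ) := by exact_mod_cast hl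
  have h4 : (0 : ℚ) < 4 ^ k := by positivity
  nlinarith [mul_pos (mul_pos hCq hCq) h4, mul_pos hCq h4,
    mul_le_mul_of_nonneg_left hlq (le_of_lt (mul_pos (mul_pos hCq hCq) h4))]
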